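/- For all integers n and k with 1 ≤ k < n, the cardinality of the set K_{n,k} equals k · f_{n−1, k}. -/

import Mathlib

open Finset

/-- The word of a permutation `σ` of `Fin n`: the letter at (0-based) position `i`,
viewed as a natural number (the letters are `0, 1, ..., n-1`, identified with the usual
letters `1, ..., n`); junk value `0` outside the range. -/
def entry {n : ℕ} (σ : Equiv.Perm (Fin n)) (i : ℕ) : ℕ :=
  if h : i < n then (σ ⟨i, h⟩ : ℕ) else 0

/-- Position `i` starts a run of the word `w`: either `i = 0`, or there is a
descent at position `i - 1`. -/
def WordRunStart (w : ℕ → ℕ) (i : ℕ) : Prop :=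
  i = 0 ∨ w i < w (i - 1)

instance (w : ℕ → ℕ) (i : ℕ) : Decidable (WordRunStart w i) :=
  inferInstanceAs (Decidable (i = 0 ∨ w i < w (i - 1)))

/-- The number of runs of the length-`m` word `w` (maximal consecutive increasing subwords). -/
def wordRuns (w : ℕ → ℕ) (m : ℕ) : ℕ :=
  ((Finset.range m).filter fun i => WordRunStart w i).card

/-- The length-`m` word `w` is flattened: the first entries of its runs,
read from left to right, increase. -/
def WordFlattened (w : ℕ → ℕ) (m : ℕ) : Prop :=
  ∀ i < m, ∀ j < m, WordRunStart w i → WordRunStart w j → i < j → w i < w j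

instance (w : ℕ → ℕ) (m : ℕ) : Decidable (WordFlattened w m) :=
  inferInstanceAs (Decidable (∀ i < m, ∀ j < m,
    WordRunStart w i → WordRunStart w j → i < j → w i < w j))

/-- Position `i` (0-based) starts a run of the permutation `σ`. -/
def IsRunStart {n : ℕ} (σ : Equiv.Perm (Fin n)) (i : ℕ) : Prop :=
  i < n ∧ WordRunStart (entry σ) i

instance {n : ℕ} (σ : Equiv.Perm (Fin n)) (i : ℕ) : Decidable (IsRunStart σ i) :=
  inferInstanceAs (Decidable (i < n ∧ WordRunStart (entry σ) i))

/-- The number of runs of the permutation `σ`. -/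
def runCount {n : ℕ} (σ : Equiv.Perm (Fin n)) : ℕ :=
  wordRuns (entry σ) n

/-- `σ` is a flattened partition. -/
def IsFlattened {n : ℕ} (σ : Equiv.Perm (Fin n)) : Prop :=
  WordFlattened (entry σ) n

instance {n : ℕ} (σ : Equiv.Perm (Fin n)) : Decidable (IsFlattened σ) :=
  inferInstanceAs (Decidable (WordFlattened (entry σ) n))

/-- `flatSet n k`: the set `F_{n,k}` of flattened partitions over `[n]` with exactly `k` runs. -/
def flatSet (n k : ℕ) : Finset (Equiv.Perm (Fin n)) :=
  Finset.univ.filter fun σ => IsFlattened σ ∧ runCount σ = k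

/-- `f n k = |F_{n,k}|`, the number of flattened partitions over `[n]` with exactly `k` runs. -/
def f (n k : ℕ) : ℕ := (flatSet n k).card

/-- The (0-based) position of the largest letter of `σ`. -/
def delPos {n : ℕ} (σ : Equiv.Perm (Fin n)) : ℕ :=
  if h : 0 < n then (σ.symm ⟨n - 1, Nat.sub_lt h Nat.one_pos⟩ : ℕ) else 0

/-- The word on `[n-1]` obtained from `σ` by deleting its largest letter `n`. -/
def delWord {n : ℕ} (σ : Equiv.Perm (Fin n)) (i : ℕ) : ℕ :=
  if i < delPos σ then entry σ i else entry σ (i + 1)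

/-- The number of runs of the word obtained from `σ` by deleting its largest letter `n`. -/
def delRuns {n : ℕ} (σ : Equiv.Perm (Fin n)) : ℕ :=
  wordRuns (delWord σ) (n - 1)

/-- `Kset n k`: the set `K_{n,k}` of flattened partitions over `[n]` with exactly `k` runs
such that deleting the letter `n` leaves the number of runs unchanged. -/
def Kset (n k : ℕ) : Finset (Equiv.Perm (Fin n)) :=
  (flatSet n k).filter fun σ => delRuns σ = k

/-- `Lset n k`: the set `L_{n,k}` of flattened partitions over `[n]` with exactly `k` runs
such that deleting the letter `n` reduces the number of runs by one. -/
def Lset (n k : ℕ) : Finset (Equiv.Perm (Fin n)) :=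
  (flatSet n k).filter fun σ => delRuns σ = k - 1

/-! ### word-level lemmas -/

namespace CardKAux

/-- insertion map on positions -/
def φ (p i : ℕ) : ℕ := if i < p then i else i + 1

/-- the word with position `p` deleted -/
def dw (w : ℕ → ℕ) (p i : ℕ) : ℕ := if i < p then w i else w (i + 1)

lemma dw_eq (w : ℕ → ℕ) (p i : ℕ) : dw w p i = w (φ p i) := by
  unfold dw φ; split <;> rfl

lemma φ_inj (p : ℕ) : Function.Injective (φ p) := by
  intro a b h; unfold φ at h; split_ifs at h <;> omega

section

variable {w : ℕ → ℕ} {p m : ℕ}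

lemma RS_succ (w : ℕ → ℕ) (i : ℕ) : WordRunStart w (i+1) ↔ w (i+1) < w i := by
  unfold WordRunStart
  rw [Nat.add_sub_cancel]
  constructor
  · rintro (h | h)
    · exact absurd h (by omega)
    · exact h
  · exact Or.inr

lemma not_RS_p (hp1 : 1 ≤ p) (hpm : p ≤ m)
    (hmax : ∀ i ≤ m, i ≠ p → w i < w p) : ¬ WordRunStart w p := by
  rintro (h | h)
  · omega
  · exact absurd (hmax (p-1) (by omega) (by omega)) (by omega)

lemma RS_iff (hm : 1 ≤ m) (hp1 : 1 ≤ p) (hpm : p ≤ m)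
    (hmax : ∀ i ≤ m, i ≠ p → w i < w p)
    (hG : p = m ∨ w (p+1) < w (p-1)) :
    ∀ i < m, (WordRunStart (dw w p) i ↔ WordRunStart w (φ p i)) := by
  intro i him
  rcases lt_trichotomy i p with h | rfl | h
  · have e1 : φ p i = i := if_pos h
    have e2 : dw w p i = w i := if_pos h
    have e3 : dw w p (i-1) = w (i-1) := if_pos (by omega)
    rw [e1]; unfold WordRunStart; rw [e2, e3]
  · have hlt : i < m := him
    have hd : w (i+1) < w (i-1) := by
      rcases hG with h | h
      · omega
      · exact h
    have e1 : φ i i = i + 1 := if_neg (by omega)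
    rw [e1, RS_succ]
    constructor
    · intro _
      exact hmax (i+1) (by omega) (by omega)
    · intro _
      right
      have e2 : dw w i i = w (i+1) := if_neg (by omega)
      have e3 : dw w i (i-1) = w (i-1) := if_pos (by omega)
      rw [e2, e3]; exact hd
  · have e1 : φ p i = i + 1 := if_neg (by omega)
    have e2 : dw w p i = w (i+1) := if_neg (by omega)
    have e3 : dw w p (i-1) = w (i-1+1) := if_neg (by omega)
    have e4 : i - 1 + 1 = i := by omega
    rw [e1, RS_succ]
    unfold WordRunStart
    rw [e2, e3, e4]
    constructor
    · rintro (h' | h')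
      · omega
      · exact h'
    · intro h'
      exact Or.inr h'

lemma filter_RS_good (hm : 1 ≤ m) (hp1 : 1 ≤ p) (hpm : p ≤ m)
    (hmax : ∀ i ≤ m, i ≠ p → w i < w p)
    (hG : p = m ∨ w (p+1) < w (p-1)) :
    (range (m+1)).filter (fun a => WordRunStart w a)
      = ((range m).filter (fun i => WordRunStart (dw w p) i)).image (φ p) := by
  ext a
  simp only [mem_filter, mem_range, mem_image]
  constructor
  · rintro ⟨ham, hrs⟩
    have hanep : a ≠ p := fun h => not_RS_p hp1 hpm hmax (h ▸ hrs)
    rcases lt_or_gt_of_ne hanep with h | h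
    · exact ⟨a, ⟨by omega, (RS_iff hm hp1 hpm hmax hG a (by omega)).2
        (by rwa [show φ p a = a from if_pos h])⟩, if_pos h⟩
    · refine ⟨a - 1, ⟨by omega, (RS_iff hm hp1 hpm hmax hG (a-1) (by omega)).2 ?_⟩, ?_⟩
      · rwa [show φ p (a-1) = a from by unfold φ; rw [if_neg (by omega)]; omega]
      · unfold φ; rw [if_neg (by omega)]; omega
  · rintro ⟨i, ⟨him, hrs⟩, rfl⟩
    refine ⟨?_, (RS_iff hm hp1 hpm hmax hG i him).1 hrs⟩
    unfold φ; split <;> omega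

lemma runs_good (hm : 1 ≤ m) (hp1 : 1 ≤ p) (hpm : p ≤ m)
    (hmax : ∀ i ≤ m, i ≠ p → w i < w p)
    (hG : p = m ∨ w (p+1) < w (p-1)) :
    wordRuns w (m+1) = wordRuns (dw w p) m := by
  unfold wordRuns
  rw [filter_RS_good hm hp1 hpm hmax hG, card_image_of_injective _ (φ_inj p)]

lemma flat_iff (hm : 1 ≤ m) (hp1 : 1 ≤ p) (hpm : p ≤ m)
    (hmax : ∀ i ≤ m, i ≠ p → w i < w p)
    (hG : p = m ∨ w (p+1) < w (p-1)) :
    WordFlattened w (m+1) ↔ WordFlattened (dw w p) m := by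
  constructor
  · intro H i him j hjm ri rj hij
    rw [dw_eq, dw_eq]
    refine H (φ p i) ?_ (φ p j) ?_ ?_ ?_ ?_
    · unfold φ; split <;> omega
    · unfold φ; split <;> omega
    · exact (RS_iff hm hp1 hpm hmax hG i him).1 ri
    · exact (RS_iff hm hp1 hpm hmax hG j hjm).1 rj
    · unfold φ; split_ifs <;> omega
  · intro H i him j hjm ri rj hij
    have hi : i ≠ p := fun h => not_RS_p hp1 hpm hmax (h ▸ ri)
    have hj : j ≠ p := fun h => not_RS_p hp1 hpm hmax (h ▸ rj)
    set i' := if i < p then i else i - 1 with hi'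
    set j' := if j < p then j else j - 1 with hj'
    have hφi : φ p i' = i := by unfold φ; rw [hi']; split_ifs <;> omega
    have hφj : φ p j' = j := by unfold φ; rw [hj']; split_ifs <;> omega
    have hi'm : i' < m := by rw [hi']; split_ifs <;> omega
    have hj'm : j' < m := by rw [hj']; split_ifs <;> omega
    have := H i' hi'm j' hj'm
      ((RS_iff hm hp1 hpm hmax hG i' hi'm).2 (hφi ▸ ri))
      ((RS_iff hm hp1 hpm hmax hG j' hj'm).2 (hφj ▸ rj))
      (by rw [hi', hj']; split_ifs <;> omega)
    rwa [dw_eq, dw_eq, hφi, hφj] at this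

lemma RS_iff_zero (hm : 1 ≤ m)
    (hmax : ∀ i ≤ m, i ≠ 0 → w i < w 0) :
    ∀ i < m, (WordRunStart (dw w 0) i ↔ WordRunStart w (i+1)) := by
  intro i him
  rcases Nat.eq_zero_or_pos i with rfl | hi
  · rw [show (0:ℕ) + 1 = 0 + 1 from rfl, RS_succ]
    constructor
    · intro _
      simpa using hmax 1 (by omega) (by omega)
    · intro _; left; rfl
  · have e2 : dw w 0 i = w (i+1) := if_neg (by omega)
    have e3 : dw w 0 (i-1) = w (i-1+1) := if_neg (by omega)
    have e4 : i - 1 + 1 = i := by omega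
    rw [RS_succ]
    unfold WordRunStart
    rw [e2, e3, e4]
    constructor
    · rintro (h | h)
      · omega
      · exact h
    · intro h
      exact Or.inr h

lemma runs_bad_zero (hm : 1 ≤ m)
    (hmax : ∀ i ≤ m, i ≠ 0 → w i < w 0) :
    wordRuns w (m+1) = wordRuns (dw w 0) m + 1 := by
  unfold wordRuns
  have hset : (range (m+1)).filter (fun a => WordRunStart w a)
      = insert 0 (((range m).filter (fun i => WordRunStart (dw w 0) i)).image (· + 1)) := by
    ext a
    simp only [mem_insert, mem_filter, mem_range, mem_image]
    constructor
    · rintro ⟨ham, hrs⟩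
      rcases Nat.eq_zero_or_pos a with rfl | ha
      · exact Or.inl rfl
      · exact Or.inr ⟨a - 1, ⟨by omega, (RS_iff_zero hm hmax (a-1) (by omega)).2
          (by rwa [show a - 1 + 1 = a from by omega])⟩, by omega⟩
    · rintro (rfl | ⟨i, ⟨him, hrs⟩, rfl⟩)
      · exact ⟨by omega, Or.inl rfl⟩
      · exact ⟨by omega, (RS_iff_zero hm hmax i him).1 hrs⟩
  rw [hset, card_insert_of_notMem (by simp),
    card_image_of_injective _ (fun a b h => by omega)]

lemma RS_iff_bad (hm : 1 ≤ m) (hp1 : 1 ≤ p) (hpm : p < m)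
    (hmax : ∀ i ≤ m, i ≠ p → w i < w p)
    (hB : ¬ w (p+1) < w (p-1)) :
    ∀ i < m, i ≠ p → (WordRunStart (dw w p) i ↔ WordRunStart w (φ p i)) := by
  intro i him hip
  rcases lt_or_gt_of_ne hip with h | h
  · have e1 : φ p i = i := if_pos h
    have e2 : dw w p i = w i := if_pos h
    have e3 : dw w p (i-1) = w (i-1) := if_pos (by omega)
    rw [e1]; unfold WordRunStart; rw [e2, e3]
  · have e1 : φ p i = i + 1 := if_neg (by omega)
    have e2 : dw w p i = w (i+1) := if_neg (by omega)
    have e3 : dw w p (i-1) = w (i-1+1) := if_neg (by omega)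
    have e4 : i - 1 + 1 = i := by omega
    rw [e1, RS_succ]
    unfold WordRunStart
    rw [e2, e3, e4]
    constructor
    · rintro (h' | h')
      · omega
      · exact h'
    · intro h'
      exact Or.inr h'

lemma not_RS_dw_p (hp1 : 1 ≤ p) (hB : ¬ w (p+1) < w (p-1)) :
    ¬ WordRunStart (dw w p) p := by
  rintro (h | h)
  · omega
  · have e2 : dw w p p = w (p+1) := if_neg (by omega)
    have e3 : dw w p (p-1) = w (p-1) := if_pos (by omega)
    rw [e2, e3] at h; exact hB h

lemma runs_bad (hm : 1 ≤ m) (hp1 : 1 ≤ p) (hpm : p < m)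
    (hmax : ∀ i ≤ m, i ≠ p → w i < w p)
    (hB : ¬ w (p+1) < w (p-1)) :
    wordRuns w (m+1) = wordRuns (dw w p) m + 1 := by
  unfold wordRuns
  have hset : (range (m+1)).filter (fun a => WordRunStart w a)
      = insert (p+1) (((range m).filter (fun i => WordRunStart (dw w p) i)).image (φ p)) := by
    ext a
    simp only [mem_insert, mem_filter, mem_range, mem_image]
    constructor
    · rintro ⟨ham, hrs⟩
      have hanep : a ≠ p := fun h => not_RS_p hp1 (by omega) hmax (h ▸ hrs)
      rcases eq_or_ne a (p+1) with rfl | hne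
      · exact Or.inl rfl
      rcases lt_or_gt_of_ne hanep with h | h
      · exact Or.inr ⟨a, ⟨by omega, (RS_iff_bad hm hp1 hpm hmax hB a (by omega) (by omega)).2
          (by rwa [show φ p a = a from if_pos h])⟩, if_pos h⟩
      · refine Or.inr ⟨a - 1, ⟨by omega, (RS_iff_bad hm hp1 hpm hmax hB (a-1) (by omega) (by omega)).2 ?_⟩, ?_⟩
        · rwa [show φ p (a-1) = a from by unfold φ; rw [if_neg (by omega)]; omega]
        · unfold φ; rw [if_neg (by omega)]; omega
    · rintro (rfl | ⟨i, ⟨him, hrs⟩, rfl⟩)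
      · exact ⟨by omega, (RS_succ w p).2 (hmax (p+1) (by omega) (by omega))⟩
      · have hip : i ≠ p := fun h => not_RS_dw_p hp1 hB (h ▸ hrs)
        refine ⟨?_, (RS_iff_bad hm hp1 hpm hmax hB i him hip).1 hrs⟩
        unfold φ; split <;> omega
  have hnm : p + 1 ∉ ((range m).filter (fun i => WordRunStart (dw w p) i)).image (φ p) := by
    simp only [mem_image, mem_filter, mem_range, not_exists]
    rintro i ⟨⟨him, hrs⟩, hφ⟩
    have : i = p := by unfold φ at hφ; split_ifs at hφ <;> omega
    exact not_RS_dw_p hp1 hB (this ▸ hrs)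
  rw [hset, card_insert_of_notMem hnm, card_image_of_injective _ (φ_inj p)]

end

/-! ### permutation level -/

def insPerm {m : ℕ} (τ : Equiv.Perm (Fin m)) (p : Fin (m+1)) : Equiv.Perm (Fin (m+1)) :=
  (finSuccEquiv' p).trans ((Equiv.optionCongr τ).trans (finSuccEquiv' (Fin.last m)).symm)

def delPerm {m : ℕ} (σ : Equiv.Perm (Fin (m+1))) : Equiv.Perm (Fin m) :=
  Equiv.removeNone
    (((finSuccEquiv' (σ.symm (Fin.last m))).symm.trans σ).trans
      (finSuccEquiv' (Fin.last m)))

lemma insPerm_apply_self {m : ℕ} (τ : Equiv.Perm (Fin m)) (p : Fin (m+1)) :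
    insPerm τ p p = Fin.last m := by
  simp [insPerm, finSuccEquiv'_at]

lemma insPerm_apply_succAbove {m : ℕ} (τ : Equiv.Perm (Fin m)) (p : Fin (m+1)) (j : Fin m) :
    insPerm τ p (p.succAbove j) = (τ j).castSucc := by
  simp [insPerm, finSuccEquiv'_succAbove, finSuccEquiv'_symm_some, Fin.succAbove_last]

lemma delPerm_apply {m : ℕ} (σ : Equiv.Perm (Fin (m+1))) (j : Fin m) :
    (delPerm σ j).castSucc = σ ((σ.symm (Fin.last m)).succAbove j) := by
  set p := σ.symm (Fin.last m)
  set e := ((finSuccEquiv' p).symm.trans σ).trans (finSuccEquiv' (Fin.last m))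
  have hne : σ (p.succAbove j) ≠ Fin.last m := by
    intro h
    have := σ.injective (h.trans (σ.apply_symm_apply (Fin.last m)).symm)
    exact Fin.succAbove_ne p j this
  have hes : e (some j) = some ((σ (p.succAbove j)).castPred hne) := by
    simp only [e, Equiv.trans_apply, finSuccEquiv'_symm_some]
    show finSuccEquiv' (Fin.last m) (σ (p.succAbove j)) = _
    conv_lhs => rw [← Fin.castSucc_castPred (σ (p.succAbove j)) hne]
    exact finSuccEquiv'_last_apply_castSucc _
  have := Equiv.removeNone_some e ⟨_, hes⟩
  rw [hes] at this
  have h2 : delPerm σ j = (σ (p.succAbove j)).castPred hne := Option.some_injective _ this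
  rw [h2, Fin.castSucc_castPred]

lemma delPos_eq {m : ℕ} (σ : Equiv.Perm (Fin (m+1))) :
    delPos σ = (σ.symm (Fin.last m) : ℕ) := by
  simp [delPos, Fin.last]

lemma delPos_le {m : ℕ} (σ : Equiv.Perm (Fin (m+1))) : delPos σ ≤ m := by
  rw [delPos_eq]; exact Fin.is_le _

lemma entry_delPos {m : ℕ} (σ : Equiv.Perm (Fin (m+1))) :
    entry σ (delPos σ) = m := by
  rw [delPos_eq, entry, dif_pos (by exact (σ.symm (Fin.last m)).isLt)]
  have : (⟨(σ.symm (Fin.last m) : ℕ), (σ.symm (Fin.last m)).isLt⟩ : Fin (m+1))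
      = σ.symm (Fin.last m) := rfl
  rw [this, Equiv.apply_symm_apply]
  rfl

lemma hmax_entry {m : ℕ} (σ : Equiv.Perm (Fin (m+1))) :
    ∀ i ≤ m, i ≠ delPos σ → entry σ i < entry σ (delPos σ) := by
  intro i him hne
  rw [entry_delPos]
  rw [entry, dif_pos (by omega)]
  have h1 : (σ ⟨i, by omega⟩ : ℕ) ≤ m := Fin.is_le _
  rcases eq_or_ne ((σ ⟨i, by omega⟩ : ℕ)) m with h | h
  · exfalso
    have : σ ⟨i, by omega⟩ = Fin.last m := Fin.ext h
    have : (⟨i, by omega⟩ : Fin (m+1)) = σ.symm (Fin.last m) :=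
      (Equiv.eq_symm_apply σ).2 this
    apply hne
    rw [delPos_eq]
    exact congrArg Fin.val this
  · omega

lemma entry_eq_dw {m : ℕ} (σ : Equiv.Perm (Fin (m+1))) :
    delWord σ = dw (entry σ) (delPos σ) := rfl

lemma entry_delPerm {m : ℕ} (σ : Equiv.Perm (Fin (m+1))) :
    entry (delPerm σ) = delWord σ := by
  funext i
  rcases lt_or_ge i m with him | him
  · rw [entry, dif_pos him]
    have h := delPerm_apply σ ⟨i, him⟩
    have hval : (delPerm σ ⟨i, him⟩ : ℕ)
        = (σ ((σ.symm (Fin.last m)).succAbove ⟨i, him⟩) : ℕ) := by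
      rw [← h]; rfl
    rw [hval, delWord, delPos_eq]
    rcases lt_or_ge i ((σ.symm (Fin.last m) : ℕ)) with h2 | h2
    · rw [if_pos h2, Fin.succAbove_of_castSucc_lt _ _ (by
        rw [Fin.lt_iff_val_lt_val]; exact h2)]
      rw [entry, dif_pos (by omega)]
      rfl
    · rw [if_neg (by omega), Fin.succAbove_of_le_castSucc _ _ (by
        rw [Fin.le_iff_val_le_val]; exact h2)]
      rw [entry, dif_pos (by omega)]
      rfl
  · rw [entry, dif_neg (by omega), delWord]
    rw [if_neg (by have := delPos_le σ; omega), entry, dif_neg (by omega)]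

lemma delPos_insPerm {m : ℕ} (τ : Equiv.Perm (Fin m)) (p : Fin (m+1)) :
    delPos (insPerm τ p) = (p : ℕ) := by
  rw [delPos_eq]
  have : (insPerm τ p).symm (Fin.last m) = p := by
    rw [Equiv.symm_apply_eq, insPerm_apply_self]
  rw [this]

lemma entry_insPerm {m : ℕ} (τ : Equiv.Perm (Fin m)) (p : Fin (m+1)) (i : ℕ) :
    entry (insPerm τ p) i
      = if i = (p : ℕ) then m else if i < (p : ℕ) then entry τ i else entry τ (i-1) := by
  rcases eq_or_ne i (p : ℕ) with rfl | hne
  · rw [if_pos rfl, entry, dif_pos p.isLt]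
    have : (⟨(p : ℕ), p.isLt⟩ : Fin (m+1)) = p := rfl
    rw [this, insPerm_apply_self]; rfl
  · rw [if_neg hne]
    rcases lt_or_ge i (p : ℕ) with h | h
    · rw [if_pos h]
      have him : i < m := by have := p.isLt; omega
      have key : (⟨i, by omega⟩ : Fin (m+1)) = p.succAbove ⟨i, him⟩ := by
        rw [Fin.succAbove_of_castSucc_lt _ _ (by rw [Fin.lt_iff_val_lt_val]; exact h)]
        rfl
      rw [entry, dif_pos (by omega : i < m + 1), key, insPerm_apply_succAbove]
      rw [entry, dif_pos him]
      rfl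
    · rw [if_neg (by omega)]
      rcases lt_or_ge i (m+1) with him | him
      · have hi1 : i - 1 < m := by omega
        have key : (⟨i, him⟩ : Fin (m+1)) = p.succAbove ⟨i-1, hi1⟩ := by
          rw [Fin.succAbove_of_le_castSucc _ _ (by
            rw [Fin.le_iff_val_le_val]; show (p:ℕ) ≤ i - 1; omega)]
          ext; show i = i - 1 + 1; omega
        rw [entry, dif_pos him, key, insPerm_apply_succAbove]
        rw [entry, dif_pos hi1]
        rfl
      · rw [entry, dif_neg (by omega), entry, dif_neg (by omega)]

lemma delWord_insPerm {m : ℕ} (τ : Equiv.Perm (Fin m)) (p : Fin (m+1)) :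
    delWord (insPerm τ p) = entry τ := by
  funext i
  rw [delWord, delPos_insPerm, entry_insPerm, entry_insPerm]
  rcases lt_or_ge i (p : ℕ) with h | h
  · rw [if_pos h, if_neg (by omega), if_pos h]
  · rw [if_neg (by omega), if_neg (by omega), if_neg (by omega),
      show i + 1 - 1 = i from by omega]

lemma entry_inj {m : ℕ} {σ₁ σ₂ : Equiv.Perm (Fin m)} (h : entry σ₁ = entry σ₂) :
    σ₁ = σ₂ := by
  apply Equiv.ext
  intro x
  have := congrFun h x.val
  rw [entry, entry, dif_pos x.isLt, dif_pos x.isLt] at this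
  exact Fin.ext (by simpa using this)

lemma insPerm_delPerm {m : ℕ} (σ : Equiv.Perm (Fin (m+1))) :
    insPerm (delPerm σ) ⟨delPos σ, by have := delPos_le σ; omega⟩ = σ := by
  apply entry_inj
  funext i
  rw [entry_insPerm]
  simp only [entry_delPerm]
  rcases eq_or_ne i (delPos σ) with rfl | hne
  · rw [if_pos rfl, entry_delPos]
  · rw [if_neg (by simpa using hne)]
    rcases lt_or_ge i (delPos σ) with h | h
    · rw [if_pos (by simpa using h), delWord, if_pos h]
    · rw [if_neg (by simp; omega), delWord, if_neg (by omega),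
        show i - 1 + 1 = i from by omega]

lemma delPerm_insPerm {m : ℕ} (τ : Equiv.Perm (Fin m)) (p : Fin (m+1)) :
    delPerm (insPerm τ p) = τ :=
  entry_inj ((entry_delPerm _).trans (delWord_insPerm τ p))

/-! ### good positions -/

def goodPos {m : ℕ} (τ : Equiv.Perm (Fin m)) : Finset ℕ :=
  (range (m+1)).filter (fun p => p = m ∨ (1 ≤ p ∧ entry τ p < entry τ (p-1)))

lemma card_goodPos {m k : ℕ} (hm : 1 ≤ m) (hk : 1 ≤ k) (τ : Equiv.Perm (Fin m))
    (hτ : runCount τ = k) : (goodPos τ).card = k := by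
  have h1 : goodPos τ
      = insert m ((range m).filter (fun p => WordRunStart (entry τ) p ∧ p ≠ 0)) := by
    ext a
    simp only [goodPos, mem_insert, mem_filter, mem_range]
    simp only [WordRunStart]
    constructor
    · rintro ⟨ham, h | ⟨h1, h2⟩⟩
      · exact Or.inl h
      · rcases eq_or_ne a m with rfl | hne
        · exact Or.inl rfl
        · exact Or.inr ⟨by omega, Or.inr h2, by omega⟩
    · rintro (rfl | ⟨ham, h | h, hne⟩)
      · exact ⟨by omega, Or.inl rfl⟩
      · omega
      · exact ⟨by omega, Or.inr ⟨by omega, h⟩⟩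
  have h2 : (range m).filter (fun p => WordRunStart (entry τ) p)
      = insert 0 ((range m).filter (fun p => WordRunStart (entry τ) p ∧ p ≠ 0)) := by
    ext a
    simp only [mem_insert, mem_filter, mem_range]
    constructor
    · rintro ⟨ham, hrs⟩
      rcases eq_or_ne a 0 with rfl | hne
      · exact Or.inl rfl
      · exact Or.inr ⟨ham, hrs, hne⟩
    · rintro (rfl | ⟨ham, hrs, hne⟩)
      · exact ⟨by omega, Or.inl rfl⟩
      · exact ⟨ham, hrs⟩
  have hk2 : runCount τ
      = ((range m).filter (fun p => WordRunStart (entry τ) p)).card := rfl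
  rw [h2, card_insert_of_notMem (by simp)] at hk2
  rw [h1, card_insert_of_notMem (by simp)]
  omega

end CardKAux

open CardKAux

/-- For all integers `n`, `k` with `1 ≤ k < n`, the cardinality of `K_{n,k}` is
`k ⬝ f_{n-1, k}`. -/
theorem card_Kset (n k : ℕ) (hk : 1 ≤ k) (hkn : k < n) :
    (Kset n k).card = k * f (n - 1) k := by
  obtain ⟨m, rfl⟩ : ∃ m, n = m + 1 := ⟨n - 1, by omega⟩
  have hm : 1 ≤ m := by omega
  have hred : m + 1 - 1 = m := rfl
  have key : (Kset (m+1) k).card = ((flatSet m k).sigma (fun τ => goodPos τ)).card := by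
    refine Finset.card_bij'
      (fun σ _ => (⟨delPerm σ, delPos σ⟩ : Σ _ : Equiv.Perm (Fin m), ℕ))
      (fun b hb => insPerm b.1 ⟨b.2, by
        have := (Finset.mem_sigma.1 hb).2
        simp only [goodPos, mem_filter, mem_range] at this
        omega⟩) ?_ ?_ ?_ ?_
    · -- hi : forward membership
      intro σ hσ
      rw [Finset.mem_sigma]
      simp only [Kset, flatSet, mem_filter, mem_univ, true_and] at hσ
      obtain ⟨⟨hflat, hruns⟩, hdel⟩ := hσ
      set p := delPos σ with hp
      have hpm : p ≤ m := delPos_le σ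
      have hmax : ∀ i ≤ m, i ≠ p → entry σ i < entry σ p := hmax_entry σ
      have hruns' : wordRuns (entry σ) (m+1) = k := hruns
      have hdel' : wordRuns (dw (entry σ) p) m = k := by
        rw [← entry_eq_dw]; exact hdel
      have hGood : 1 ≤ p ∧ (p = m ∨ entry σ (p+1) < entry σ (p-1)) := by
        rcases eq_or_ne p m with hpm' | hpm'
        · exact ⟨by omega, Or.inl hpm'⟩
        rcases Nat.eq_zero_or_pos p with hp0 | hp0
        · exfalso
          have hmax0 : ∀ i ≤ m, i ≠ 0 → entry σ i < entry σ 0 := by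
            intro i h1 h2
            have := hmax i h1 (by omega)
            rw [hp0] at this
            exact this
          have hcon := runs_bad_zero hm hmax0
          rw [hp0] at hdel'
          omega
        by_cases hd : entry σ (p+1) < entry σ (p-1)
        · exact ⟨hp0, Or.inr hd⟩
        · exfalso
          have := runs_bad hm hp0 (by omega) hmax hd
          omega
      obtain ⟨hp1, hG⟩ := hGood
      constructor
      · simp only [flatSet, mem_filter, mem_univ, true_and]
        constructor
        · show WordFlattened (entry (delPerm σ)) m
          rw [entry_delPerm, entry_eq_dw]
          exact (flat_iff hm hp1 hpm hmax hG).1 hflat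
        · show wordRuns (entry (delPerm σ)) m = k
          rw [entry_delPerm, entry_eq_dw]
          exact hdel'
      · simp only [goodPos, mem_filter, mem_range]
        refine ⟨by omega, ?_⟩
        rcases hG with h | h
        · exact Or.inl h
        · refine Or.inr ⟨hp1, ?_⟩
          rw [entry_delPerm]
          rw [delWord, if_neg (by omega), delWord, if_pos (by omega)]
          exact h
    · -- hj : backward membership
      rintro ⟨τ, p⟩ hb
      obtain ⟨hτ, hp⟩ := Finset.mem_sigma.1 hb
      simp only [flatSet, mem_filter, mem_univ, true_and] at hτ
      obtain ⟨hflat, hruns⟩ := hτ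
      simp only [goodPos, mem_filter, mem_range] at hp
      obtain ⟨hpm, hgood⟩ := hp
      have hpm' : p ≤ m := by omega
      set σ := insPerm τ (⟨p, by omega⟩ : Fin (m+1)) with hσ
      have hdp : delPos σ = p := delPos_insPerm τ _
      have hdw : delWord σ = entry τ := delWord_insPerm τ _
      have hdweq : dw (entry σ) p = entry τ := by
        rw [← hdp, ← entry_eq_dw]; exact hdw
      have hp1 : 1 ≤ p := by rcases hgood with h | h; omega; exact h.1
      have hmax : ∀ i ≤ m, i ≠ p → entry σ i < entry σ p := by
        have := hmax_entry σ
        rw [hdp] at this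
        exact this
      have hG : p = m ∨ entry σ (p+1) < entry σ (p-1) := by
        rcases hgood with h | ⟨h1, h2⟩
        · exact Or.inl h
        · right
          have e1 : entry σ (p+1) = entry τ p := by
            rw [← hdweq, dw, if_neg (by omega)]
          have e2 : entry σ (p-1) = entry τ (p-1) := by
            rw [← hdweq, dw, if_pos (by omega)]
          rw [e1, e2]; exact h2
      simp only [Kset, flatSet, mem_filter, mem_univ, true_and]
      refine ⟨⟨?_, ?_⟩, ?_⟩
      · show WordFlattened (entry σ) (m+1)
        apply (flat_iff hm hp1 hpm' hmax hG).2
        rw [hdweq]; exact hflat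
      · show wordRuns (entry σ) (m+1) = k
        rw [runs_good hm hp1 hpm' hmax hG, hdweq]; exact hruns
      · show wordRuns (delWord σ) m = k
        rw [hdw]; exact hruns
    · -- left_inv
      intro σ hσ
      exact insPerm_delPerm σ
    · -- right_inv
      rintro ⟨τ, p⟩ hb
      have h1 := delPerm_insPerm τ (⟨p, by
        rw [Finset.mem_sigma] at hb
        have := hb.2
        simp only [goodPos, mem_filter, mem_range] at this
        omega⟩ : Fin (m+1))
      have h2 := delPos_insPerm τ (⟨p, by
        rw [Finset.mem_sigma] at hb
        have := hb.2
        simp only [goodPos, mem_filter, mem_range] at this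
        omega⟩ : Fin (m+1))
      exact Sigma.ext h1 (heq_of_eq h2)
  rw [key, Finset.card_sigma]
  rw [Finset.sum_congr rfl (fun τ hτ => card_goodPos hm hk τ (by
    simp only [flatSet, mem_filter, mem_univ, true_and] at hτ
    exact hτ.2))]
  rw [Finset.sum_const, smul_eq_mul, hred]
  rw [mul_comm]
  rfl
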